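/- Let m ≥ 2, K ∈ ℝ^{m×m}, η ∈ ℝ^m, a > 0, b > 0, and fix j ∈ {1,…,m−1} and α > max{0, 1−a, 1−b}. For x ∈ Δ_{−m}° write x_m := 1 − Σ_{i=1}^{m−1} x_i, regard x = (x_1,…,x_m) ∈ ℝ^m, and define the profiled score s_j(x) = −(κ_{·,j}^⊤ x^a) x_j^{a−1} + (κ_{·,m}^⊤ x^a) x_m^{a−1} + η_j x_j^{b−1} − η_m x_m^{b−1}, where κ_{·,j} denotes the j-th column of K and x^a is the componentwise power. Then ∫_{Δ_{−m}°} min{x_j, x_m}^α · s_j(x)² dx < ∞. -/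

import Mathlib

open MeasureTheory Matrix Finset

/-- The open simplex `Δ_{-m}°` in `ℝ^n` (where `m = n+1`). -/
def simplexInt (n : ℕ) : Set (Fin n → ℝ) :=
  {x | (∀ i, 0 < x i) ∧ ∑ i, x i < 1}

/-- Profile the last coordinate: send `x ∈ ℝ^n` to `(x, 1 - ∑ x) ∈ ℝ^{n+1}`. -/
noncomputable def fullVec {n : ℕ} (x : Fin n → ℝ) : Fin (n + 1) → ℝ :=
  Fin.snoc x (1 - ∑ i, x i)

/-- The profiled score `s_j(x)` of the `a`-`b` model on the simplex (substituting
`x_m = 1 - ∑_{i<m} x_i`), evaluated at a full vector `X ∈ ℝ^{n+1}`. -/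
noncomputable def scoreFn {n : ℕ} (K : Matrix (Fin (n + 1)) (Fin (n + 1)) ℝ)
    (η : Fin (n + 1) → ℝ) (a b : ℝ) (j : Fin n) (X : Fin (n + 1) → ℝ) : ℝ :=
  -(∑ i, K i j.castSucc * X i ^ a) * X j.castSucc ^ (a - 1)
    + (∑ i, K i (Fin.last n) * X i ^ a) * X (Fin.last n) ^ (a - 1)
    + η j.castSucc * X j.castSucc ^ (b - 1)
    - η (Fin.last n) * X (Fin.last n) ^ (b - 1)

lemma fullVec_castSucc {n : ℕ} (x : Fin n → ℝ) (i : Fin n) :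
    fullVec x i.castSucc = x i := by
  simp [fullVec]

lemma fullVec_last {n : ℕ} (x : Fin n → ℝ) :
    fullVec x (Fin.last n) = 1 - ∑ i, x i := by
  simp [fullVec]

lemma measurableSet_simplexInt (n : ℕ) : MeasurableSet (simplexInt n) := by
  have h1 : MeasurableSet {x : Fin n → ℝ | ∀ i, 0 < x i} := by
    have : {x : Fin n → ℝ | ∀ i, 0 < x i} = ⋂ i, {x | 0 < x i} := by
      ext x; simp
    rw [this]
    exact MeasurableSet.iInter fun i =>
      measurableSet_lt measurable_const (measurable_pi_apply i)
  have h2 : MeasurableSet {x : Fin n → ℝ | ∑ i, x i < 1} :=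
    measurableSet_lt (Finset.measurable_sum _ fun i _ => measurable_pi_apply i)
      measurable_const
  exact h1.inter h2

lemma simplexInt_subset_box (n : ℕ) :
    simplexInt n ⊆ Set.pi Set.univ fun _ : Fin n => Set.Ioo (0:ℝ) 1 := by
  intro x hx
  obtain ⟨hpos, hsum⟩ := hx
  intro i _
  refine ⟨hpos i, lt_of_le_of_lt ?_ hsum⟩
  exact Finset.single_le_sum (fun k _ => (hpos k).le) (Finset.mem_univ i)

lemma integrableOn_box_rpow {n : ℕ} (i : Fin n) {c : ℝ} (hc : -1 < c) :
    IntegrableOn (fun x : Fin n → ℝ => x i ^ c)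
      (Set.pi Set.univ fun _ => Set.Ioo (0:ℝ) 1) := by
  classical
  have hfi : ∀ k : Fin n, Integrable (fun t : ℝ =>
      (Set.Ioo (0:ℝ) 1).indicator (fun t => if k = i then t ^ c else 1) t) := by
    intro k
    rw [integrable_indicator_iff measurableSet_Ioo]
    by_cases hk : k = i
    · subst hk
      simpa using (intervalIntegral.integrableOn_Ioo_rpow_iff one_pos).2 hc
    · simp only [if_neg hk]
      exact integrableOn_const measure_Ioo_lt_top.ne
  have h := MeasureTheory.Integrable.fintype_prod (𝕜 := ℝ)
    (f := fun (k : Fin n) (t : ℝ) =>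
      (Set.Ioo (0:ℝ) 1).indicator (fun t => if k = i then t ^ c else 1) t) hfi
  refine (h.integrableOn).congr_fun ?_ (MeasurableSet.univ_pi fun _ => measurableSet_Ioo)
  intro x hx
  simp only [Set.mem_pi, Set.mem_univ, forall_true_left] at hx
  have h1 : ∀ k : Fin n, (Set.Ioo (0:ℝ) 1).indicator
      (fun t => if k = i then t ^ c else 1) (x k) = if k = i then x i ^ c else 1 := by
    intro k
    rw [Set.indicator_of_mem (hx k)]
    by_cases hk : k = i <;> simp [hk]
  simp only [h1]
  simp

lemma integrableOn_simplex_rpow {n : ℕ} (i : Fin n) {c : ℝ} (hc : -1 < c) :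
    IntegrableOn (fun x : Fin n → ℝ => x i ^ c) (simplexInt n) :=
  (integrableOn_box_rpow i hc).mono_set (simplexInt_subset_box n)

/-- The reflection `x ↦ update x i0 (1 - ∑ x)` preserves Lebesgue measure. -/
lemma measurePreserving_reflect {n : ℕ} (i0 : Fin n) :
    MeasurePreserving (fun x : Fin n → ℝ => Function.update x i0 (1 - ∑ k, x k))
      volume volume := by
  classical
  set e : Fin n → ℝ := fun k => if k = i0 then 1 else 0 with he
  set M : Matrix (Fin n) (Fin n) ℝ := (1 : Matrix (Fin n) (Fin n) ℝ).updateRow i0 (fun _ => -1)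
    with hM
  have hrow : (fun _ => (-1 : ℝ))
      = ∑ k, (fun _ => (-1:ℝ)) k • (1 : Matrix (Fin n) (Fin n) ℝ) k := by
    funext l
    simp [Matrix.one_apply, Finset.sum_ite_eq]
  have hdet : M.det = -1 := by
    rw [hM, hrow, Matrix.det_updateRow_sum]
    simp
  have hmeasL : Measurable (Matrix.toLin' M) := by
    apply measurable_pi_lambda
    intro k
    simp only [Matrix.toLin'_apply, Matrix.mulVec, dotProduct]
    exact Finset.measurable_sum _ fun l _ => (measurable_pi_apply l).const_mul _
  have hmapL : Measure.map (Matrix.toLin' M) volume = volume := by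
    rw [Real.map_linearMap_volume_pi_eq_smul_volume_pi]
    · rw [LinearMap.det_toLin', hdet]; norm_num
    · rw [LinearMap.det_toLin', hdet]; norm_num
  have hT : (fun x : Fin n → ℝ => Function.update x i0 (1 - ∑ k, x k))
      = (fun y => e + y) ∘ (Matrix.toLin' M) := by
    funext x
    funext k
    simp only [Function.comp_apply, Pi.add_apply, Matrix.toLin'_apply, Matrix.mulVec, dotProduct]
    by_cases hk : k = i0
    · subst hk
      rw [Function.update_self]
      simp only [hM, Matrix.updateRow_self, he, if_pos rfl, neg_one_mul, Finset.sum_neg_distrib]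
      ring
    · rw [Function.update_of_ne hk]
      simp only [hM, Matrix.updateRow_ne hk, he, if_neg hk, Matrix.one_apply]
      simp [Finset.sum_ite_eq]
  constructor
  · rw [hT]
    exact (measurable_const_add e).comp hmeasL
  · rw [hT, ← Measure.map_map (measurable_const_add e) hmeasL, hmapL]
    exact MeasureTheory.map_add_left_eq_self volume e

lemma sum_reflect {n : ℕ} (i0 : Fin n) (x : Fin n → ℝ) :
    ∑ k, Function.update x i0 (1 - ∑ k, x k) k = 1 - x i0 := by
  classical
  rw [Finset.sum_update_of_mem (Finset.mem_univ i0)]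
  have : ∑ k ∈ Finset.univ \ {i0}, x k = (∑ k, x k) - x i0 := by
    rw [← Finset.erase_eq, Finset.sum_erase_eq_sub (Finset.mem_univ i0)]
  rw [this]
  ring

lemma reflect_involutive {n : ℕ} (i0 : Fin n) :
    Function.Involutive (fun x : Fin n → ℝ => Function.update x i0 (1 - ∑ k, x k)) := by
  intro x
  simp only
  rw [sum_reflect i0 x]
  have h1 : (1 : ℝ) - (1 - x i0) = x i0 := by ring
  rw [h1, Function.update_idem, Function.update_eq_self]

lemma reflect_mem_simplex {n : ℕ} (i0 : Fin n) (x : Fin n → ℝ) (hx : x ∈ simplexInt n) :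
    Function.update x i0 (1 - ∑ k, x k) ∈ simplexInt n := by
  obtain ⟨hpos, hsum⟩ := hx
  constructor
  · intro k
    rcases eq_or_ne k i0 with hk | hk
    · subst hk
      rw [Function.update_self]
      linarith
    · rw [Function.update_of_ne hk]
      exact hpos k
  · rw [sum_reflect i0 x]
    have := hpos i0
    linarith

lemma integrableOn_simplex_last_rpow {n : ℕ} (hn : 1 ≤ n) {c : ℝ} (hc : -1 < c) :
    IntegrableOn (fun x : Fin n → ℝ => (1 - ∑ k, x k) ^ c) (simplexInt n) := by
  classical
  set i0 : Fin n := ⟨0, hn⟩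
  set T : (Fin n → ℝ) → (Fin n → ℝ) := fun x => Function.update x i0 (1 - ∑ k, x k) with hTdef
  have hmp : MeasurePreserving T volume volume := measurePreserving_reflect i0
  have hinv : Function.Involutive T := reflect_involutive i0
  have hemb : MeasurableEmbedding T := by
    let E : MeasurableEquiv (Fin n → ℝ) (Fin n → ℝ) :=
      ⟨hinv.toPerm, hmp.measurable, hmp.measurable⟩
    exact E.measurableEmbedding
  have hpre : T ⁻¹' (simplexInt n) = simplexInt n := by
    ext x
    constructor
    · intro hx
      have h2 : T (T x) ∈ simplexInt n := reflect_mem_simplex i0 (T x) hx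
      rwa [hinv x] at h2
    · intro hx
      exact reflect_mem_simplex i0 x hx
  have key := hmp.integrableOn_comp_preimage hemb
    (f := fun x : Fin n → ℝ => (1 - ∑ k, x k) ^ c) (s := simplexInt n)
  rw [← key, hpre]
  have hcomp : ((fun x : Fin n → ℝ => (1 - ∑ k, x k) ^ c) ∘ T)
      = fun x : Fin n → ℝ => x i0 ^ c := by
    funext x
    simp only [Function.comp_apply, hTdef]
    rw [sum_reflect i0 x]
    norm_num
  rw [hcomp]
  exact integrableOn_simplex_rpow i0 hc

lemma fullVec_mem_Ioc {n : ℕ} {x : Fin n → ℝ} (hx : x ∈ simplexInt n) (i : Fin (n + 1)) :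
    0 < fullVec x i ∧ fullVec x i ≤ 1 := by
  obtain ⟨hpos, hsum⟩ := hx
  have hsumnn : 0 ≤ ∑ k, x k := Finset.sum_nonneg fun k _ => (hpos k).le
  refine Fin.lastCases ?_ ?_ i
  · rw [fullVec_last]
    constructor <;> linarith
  · intro k
    rw [fullVec_castSucc]
    have hle : x k ≤ ∑ i, x i :=
      Finset.single_le_sum (fun i _ => (hpos i).le) (Finset.mem_univ k)
    exact ⟨hpos k, by linarith⟩

lemma continuous_fullVec_apply {n : ℕ} (i : Fin (n + 1)) :
    Continuous fun x : Fin n → ℝ => fullVec x i := by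
  refine Fin.lastCases ?_ ?_ i
  · simp only [fullVec_last]
    exact continuous_const.sub (continuous_finset_sum _ fun k _ => continuous_apply k)
  · intro k
    simp only [fullVec_castSucc]
    exact continuous_apply k


lemma aux_abs_comb {S1 S2 c3 c4 C1 C2 M p q r s : ℝ} (h1 : |S1| ≤ C1) (h2 : |S2| ≤ C2)
    (hC1 : C1 ≤ M) (hC2 : C2 ≤ M) (h3 : |c3| ≤ M) (h4 : |c4| ≤ M)
    (hp : 0 ≤ p) (hq : 0 ≤ q) (hr : 0 ≤ r) (hs : 0 ≤ s) :
    |-S1 * p + S2 * q + c3 * r - c4 * s| ≤ M * (p + q + r + s) := by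
  have step1 : |-S1 * p + S2 * q + c3 * r - c4 * s|
      ≤ |(-S1) * p| + |S2 * q| + |c3 * r| + |c4 * s| := by
    calc |-S1 * p + S2 * q + c3 * r - c4 * s|
        ≤ |(-S1) * p + S2 * q + c3 * r| + |c4 * s| := abs_sub _ _
      _ ≤ (|(-S1) * p + S2 * q| + |c3 * r|) + |c4 * s| :=
          add_le_add_left (abs_add_le _ _) _
      _ ≤ ((|(-S1) * p| + |S2 * q|) + |c3 * r|) + |c4 * s| :=
          add_le_add_left (add_le_add_left (abs_add_le _ _) _) _
      _ = |(-S1) * p| + |S2 * q| + |c3 * r| + |c4 * s| := by ring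
  refine le_trans step1 ?_
  have e1 : |(-S1) * p| = |S1| * p := by rw [abs_mul, abs_neg, abs_of_nonneg hp]
  have e2 : |S2 * q| = |S2| * q := by rw [abs_mul, abs_of_nonneg hq]
  have e3 : |c3 * r| = |c3| * r := by rw [abs_mul, abs_of_nonneg hr]
  have e4 : |c4 * s| = |c4| * s := by rw [abs_mul, abs_of_nonneg hs]
  rw [e1, e2, e3, e4]
  have : |S1| * p + |S2| * q + |c3| * r + |c4| * s ≤ M * p + M * q + M * r + M * s := by
    refine add_le_add (add_le_add (add_le_add ?_ ?_) ?_) ?_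
    · exact mul_le_mul_of_nonneg_right (le_trans h1 hC1) hp
    · exact mul_le_mul_of_nonneg_right (le_trans h2 hC2) hq
    · exact mul_le_mul_of_nonneg_right h3 hr
    · exact mul_le_mul_of_nonneg_right h4 hs
  refine le_trans this (le_of_eq ?_)
  ring

lemma aux_four_sq (p q r s : ℝ) : (p + q + r + s) ^ 2 ≤ 4 * (p^2 + q^2 + r^2 + s^2) := by
  nlinarith [sq_nonneg (p - q), sq_nonneg (p - r), sq_nonneg (p - s),
    sq_nonneg (q - r), sq_nonneg (q - s), sq_nonneg (r - s)]

set_option maxHeartbeats 1000000 in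
/-- Weighted integrability of the squared profiled score for `a, b > 0` and
weight exponent `α > max{0, 1-a, 1-b}`. -/
theorem weighted_score_square_integrable (n : ℕ) (hn : 1 ≤ n)
    (K : Matrix (Fin (n + 1)) (Fin (n + 1)) ℝ) (η : Fin (n + 1) → ℝ)
    (a b : ℝ) (ha : 0 < a) (hb : 0 < b)
    (j : Fin n) (α : ℝ) (hα : max 0 (max (1 - a) (1 - b)) < α) :
    IntegrableOn (fun x : Fin n → ℝ =>
      min (fullVec x j.castSucc) (fullVec x (Fin.last n)) ^ α *
        (scoreFn K η a b j (fullVec x)) ^ 2) (simplexInt n) := by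
  classical
  have hα0 : 0 < α := lt_of_le_of_lt (le_max_left _ _) hα
  have hαa : 1 - a < α :=
    lt_of_le_of_lt (le_trans (le_max_left _ _) (le_max_right _ _)) hα
  have hαb : 1 - b < α :=
    lt_of_le_of_lt (le_trans (le_max_right _ _) (le_max_right _ _)) hα
  set e1 : ℝ := α + ((a - 1) + (a - 1)) with he1
  set e2 : ℝ := α + ((b - 1) + (b - 1)) with he2
  have he1' : -1 < e1 := by rw [he1]; linarith
  have he2' : -1 < e2 := by rw [he2]; linarith
  set C1 : ℝ := ∑ i, |K i j.castSucc| with hC1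
  set C2 : ℝ := ∑ i, |K i (Fin.last n)| with hC2
  set M : ℝ := C1 + C2 + |η j.castSucc| + |η (Fin.last n)| + 1 with hMdef
  have hC1nn : 0 ≤ C1 := Finset.sum_nonneg fun i _ => abs_nonneg _
  have hC2nn : 0 ≤ C2 := Finset.sum_nonneg fun i _ => abs_nonneg _
  have habsj : 0 ≤ |η j.castSucc| := abs_nonneg _
  have habsl : 0 ≤ |η (Fin.last n)| := abs_nonneg _
  have hM1 : C1 ≤ M := by
    rw [hMdef]; linarith
  have hM2 : C2 ≤ M := by
    rw [hMdef]; linarith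
  have hM3 : |η j.castSucc| ≤ M := by
    rw [hMdef]; linarith
  have hM4 : |η (Fin.last n)| ≤ M := by
    rw [hMdef]; linarith
  have hM0 : 0 < M := by
    rw [hMdef]; linarith
  -- the dominating function
  set G : (Fin n → ℝ) → ℝ := fun x =>
    (4 * M ^ 2) * ((x j) ^ e1 + (1 - ∑ k, x k) ^ e1 + (x j) ^ e2 + (1 - ∑ k, x k) ^ e2)
    with hGdef
  have hGint : IntegrableOn G (simplexInt n) := by
    have h1 := integrableOn_simplex_rpow j he1'
    have h2 := integrableOn_simplex_last_rpow hn he1'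
    have h3 := integrableOn_simplex_rpow j he2'
    have h4 := integrableOn_simplex_last_rpow hn he2'
    exact (((h1.add h2).add h3).add h4).const_mul _
  refine Integrable.mono' hGint ?_ ?_
  · -- a.e. strong measurability via continuity on the simplex
    apply ContinuousOn.aestronglyMeasurable ?_ (measurableSet_simplexInt n)
    have hXpos : ∀ x ∈ simplexInt n, ∀ i, (0:ℝ) < fullVec x i :=
      fun x hx i => (fullVec_mem_Ioc hx i).1
    have hca : ∀ i : Fin (n + 1), Continuous fun x : Fin n → ℝ => fullVec x i ^ a :=
      fun i => (continuous_fullVec_apply i).rpow_const fun x => Or.inr ha.le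
    have hS1 : Continuous fun x : Fin n → ℝ => ∑ i, K i j.castSucc * fullVec x i ^ a :=
      continuous_finset_sum _ fun i _ => continuous_const.mul (hca i)
    have hS2 : Continuous fun x : Fin n → ℝ => ∑ i, K i (Fin.last n) * fullVec x i ^ a :=
      continuous_finset_sum _ fun i _ => continuous_const.mul (hca i)
    have hp1 : ContinuousOn (fun x : Fin n → ℝ => fullVec x j.castSucc ^ (a - 1))
        (simplexInt n) :=
      (continuous_fullVec_apply j.castSucc).continuousOn.rpow_const
        fun x hx => Or.inl (ne_of_gt (hXpos x hx _))
    have hp2 : ContinuousOn (fun x : Fin n → ℝ => fullVec x (Fin.last n) ^ (a - 1))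
        (simplexInt n) :=
      (continuous_fullVec_apply (Fin.last n)).continuousOn.rpow_const
        fun x hx => Or.inl (ne_of_gt (hXpos x hx _))
    have hp3 : ContinuousOn (fun x : Fin n → ℝ => fullVec x j.castSucc ^ (b - 1))
        (simplexInt n) :=
      (continuous_fullVec_apply j.castSucc).continuousOn.rpow_const
        fun x hx => Or.inl (ne_of_gt (hXpos x hx _))
    have hp4 : ContinuousOn (fun x : Fin n → ℝ => fullVec x (Fin.last n) ^ (b - 1))
        (simplexInt n) :=
      (continuous_fullVec_apply (Fin.last n)).continuousOn.rpow_const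
        fun x hx => Or.inl (ne_of_gt (hXpos x hx _))
    have hscore : ContinuousOn (fun x : Fin n → ℝ => scoreFn K η a b j (fullVec x))
        (simplexInt n) := by
      simp only [scoreFn]
      exact ((((hS1.neg.continuousOn.mul hp1).add
        (hS2.continuousOn.mul hp2)).add
        (continuousOn_const.mul hp3)).sub
        (continuousOn_const.mul hp4))
    have hmin : ContinuousOn (fun x : Fin n → ℝ =>
        min (fullVec x j.castSucc) (fullVec x (Fin.last n)) ^ α) (simplexInt n) :=
      (((continuous_fullVec_apply j.castSucc).min
        (continuous_fullVec_apply (Fin.last n))).continuousOn).rpow_const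
        fun x hx => Or.inr hα0.le
    exact hmin.mul (hscore.pow 2)
  · -- the pointwise bound on the simplex
    refine ae_restrict_of_forall_mem (measurableSet_simplexInt n) ?_
    intro x hx
    obtain ⟨hpos, hsum⟩ := hx
    have hxmem : x ∈ simplexInt n := ⟨hpos, hsum⟩
    set u : ℝ := x j with hu
    set v : ℝ := 1 - ∑ k, x k with hv
    have hu0 : 0 < u := hpos j
    have hv0 : 0 < v := by rw [hv]; linarith
    have hfvj : fullVec x j.castSucc = u := fullVec_castSucc x j
    have hfvl : fullVec x (Fin.last n) = v := fullVec_last x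
    set p : ℝ := u ^ (a - 1) with hp
    set q : ℝ := v ^ (a - 1) with hq
    set r : ℝ := u ^ (b - 1) with hr
    set s' : ℝ := v ^ (b - 1) with hs'
    have hp0 : 0 < p := Real.rpow_pos_of_pos hu0 _
    have hq0 : 0 < q := Real.rpow_pos_of_pos hv0 _
    have hr0 : 0 < r := Real.rpow_pos_of_pos hu0 _
    have hs0 : 0 < s' := Real.rpow_pos_of_pos hv0 _
    set S1 : ℝ := ∑ i, K i j.castSucc * fullVec x i ^ a with hS1def
    set S2 : ℝ := ∑ i, K i (Fin.last n) * fullVec x i ^ a with hS2def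
    have hXa : ∀ i, |fullVec x i ^ a| ≤ 1 := by
      intro i
      obtain ⟨h1, h2⟩ := fullVec_mem_Ioc hxmem i
      rw [abs_of_nonneg (Real.rpow_nonneg h1.le a)]
      exact Real.rpow_le_one h1.le h2 ha.le
    have hS1b : |S1| ≤ C1 := by
      rw [hS1def, hC1]
      refine le_trans (Finset.abs_sum_le_sum_abs _ _) (Finset.sum_le_sum fun i _ => ?_)
      rw [abs_mul]
      calc |K i j.castSucc| * |fullVec x i ^ a| ≤ |K i j.castSucc| * 1 :=
            mul_le_mul_of_nonneg_left (hXa i) (abs_nonneg _)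
        _ = |K i j.castSucc| := mul_one _
    have hS2b : |S2| ≤ C2 := by
      rw [hS2def, hC2]
      refine le_trans (Finset.abs_sum_le_sum_abs _ _) (Finset.sum_le_sum fun i _ => ?_)
      rw [abs_mul]
      calc |K i (Fin.last n)| * |fullVec x i ^ a| ≤ |K i (Fin.last n)| * 1 :=
            mul_le_mul_of_nonneg_left (hXa i) (abs_nonneg _)
        _ = |K i (Fin.last n)| := mul_one _
    have hsceq : scoreFn K η a b j (fullVec x)
        = -S1 * p + S2 * q + η j.castSucc * r - η (Fin.last n) * s' := by
      rw [scoreFn, hS1def, hS2def, hfvj, hfvl, hp, hq, hr, hs']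
    have hscb : |scoreFn K η a b j (fullVec x)| ≤ M * (p + q + r + s') := by
      rw [hsceq]
      exact aux_abs_comb hS1b hS2b hM1 hM2 hM3 hM4 hp0.le hq0.le hr0.le hs0.le
    have hsq : (scoreFn K η a b j (fullVec x)) ^ 2 ≤ M ^ 2 * (4 * (p^2 + q^2 + r^2 + s'^2)) := by
      have h1 : (scoreFn K η a b j (fullVec x)) ^ 2 ≤ (M * (p + q + r + s')) ^ 2 := by
        have := abs_le.mp hscb
        exact sq_le_sq' this.1 this.2
      refine le_trans h1 ?_
      have h2 := aux_four_sq p q r s'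
      calc (M * (p + q + r + s')) ^ 2 = M ^ 2 * (p + q + r + s') ^ 2 := by ring
        _ ≤ M ^ 2 * (4 * (p^2 + q^2 + r^2 + s'^2)) :=
            mul_le_mul_of_nonneg_left h2 (sq_nonneg M)
    set w : ℝ := min u v with hw
    have hw0 : 0 < w := lt_min hu0 hv0
    have hwα : 0 ≤ w ^ α := Real.rpow_nonneg hw0.le α
    have hwu : w ^ α ≤ u ^ α := Real.rpow_le_rpow hw0.le (min_le_left _ _) hα0.le
    have hwv : w ^ α ≤ v ^ α := Real.rpow_le_rpow hw0.le (min_le_right _ _) hα0.le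
    have hnorm : ‖min (fullVec x j.castSucc) (fullVec x (Fin.last n)) ^ α *
        (scoreFn K η a b j (fullVec x)) ^ 2‖
        = w ^ α * (scoreFn K η a b j (fullVec x)) ^ 2 := by
      rw [hfvj, hfvl, ← hw, Real.norm_eq_abs,
        abs_of_nonneg (mul_nonneg hwα (sq_nonneg _))]
    rw [hnorm]
    have hkey : w ^ α * (p^2 + q^2 + r^2 + s'^2)
        ≤ u ^ α * p^2 + v ^ α * q^2 + u ^ α * r^2 + v ^ α * s'^2 := by
      have k1 : w ^ α * p^2 ≤ u ^ α * p^2 := mul_le_mul_of_nonneg_right hwu (sq_nonneg _)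
      have k2 : w ^ α * q^2 ≤ v ^ α * q^2 := mul_le_mul_of_nonneg_right hwv (sq_nonneg _)
      have k3 : w ^ α * r^2 ≤ u ^ α * r^2 := mul_le_mul_of_nonneg_right hwu (sq_nonneg _)
      have k4 : w ^ α * s'^2 ≤ v ^ α * s'^2 := mul_le_mul_of_nonneg_right hwv (sq_nonneg _)
      rw [mul_add, mul_add, mul_add]
      exact add_le_add (add_le_add (add_le_add k1 k2) k3) k4
    have hup : u ^ α * p ^ 2 = u ^ e1 := by
      rw [hp, sq, ← Real.rpow_add hu0, ← Real.rpow_add hu0, he1]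
    have hvq : v ^ α * q ^ 2 = v ^ e1 := by
      rw [hq, sq, ← Real.rpow_add hv0, ← Real.rpow_add hv0, he1]
    have hur : u ^ α * r ^ 2 = u ^ e2 := by
      rw [hr, sq, ← Real.rpow_add hu0, ← Real.rpow_add hu0, he2]
    have hvs : v ^ α * s' ^ 2 = v ^ e2 := by
      rw [hs', sq, ← Real.rpow_add hv0, ← Real.rpow_add hv0, he2]
    calc w ^ α * (scoreFn K η a b j (fullVec x)) ^ 2
        ≤ w ^ α * (M ^ 2 * (4 * (p^2 + q^2 + r^2 + s'^2))) :=
          mul_le_mul_of_nonneg_left hsq hwα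
      _ = (4 * M ^ 2) * (w ^ α * (p^2 + q^2 + r^2 + s'^2)) := by ring
      _ ≤ (4 * M ^ 2) * (u ^ α * p^2 + v ^ α * q^2 + u ^ α * r^2 + v ^ α * s'^2) := by
          refine mul_le_mul_of_nonneg_left hkey ?_
          positivity
      _ = G x := by
          rw [hGdef]
          simp only
          rw [hup, hvq, hur, hvs, hu, hv]
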